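/- Let p be an odd prime, let M be the sub-add matrix, and let k be the ℤ_p-order of M. Then Γ_{M,p} contains a secondary cycle — that is, there exists a vertex x ∈ (ℤ/pℤ)² whose minimal period under M is neither 1 nor k — if and only if 8 does not divide k. -/

import Mathlib

/-- The sub-add map `(a,b) ↦ (a-b, a+b)` on `(ℤ/nℤ)²`; the sub-add move graph `Γ_{M,n}`
has an arc from `v` to `subAddStep n v`. -/
def subAddStep (n : ℕ) (v : ZMod n × ZMod n) : ZMod n × ZMod n :=
  (v.1 - v.2, v.1 + v.2)

namespace Stmt17

variable {p : ℕ}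

lemma iter_formula (n : ℕ) (a b : ZMod p) :
    (subAddStep p)^[n] (a, b) =
      (((subAddStep p)^[n] (1,0)).1 * a - ((subAddStep p)^[n] (1,0)).2 * b,
       ((subAddStep p)^[n] (1,0)).2 * a + ((subAddStep p)^[n] (1,0)).1 * b) := by
  induction n with
  | zero => simp
  | succ n ih =>
    rw [Function.iterate_succ_apply', Function.iterate_succ_apply', ih]
    simp only [subAddStep, Prod.mk.injEq]
    constructor <;> ring

lemma iter_four (x : ZMod p × ZMod p) :
    (subAddStep p)^[4] x = (-4 * x.1, -4 * x.2) := by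
  show subAddStep p (subAddStep p (subAddStep p (subAddStep p x))) = _
  simp only [subAddStep, Prod.ext_iff]
  constructor <;> ring

lemma iter_eigen (i : ZMod p) (n : ℕ) (s t : ZMod p) (hi : i^2 = -1) :
    (subAddStep p)^[n] (s + t, -(i*s) + i*t) =
      ((1+i)^n * s + (1-i)^n * t, -(i*((1+i)^n * s)) + i*((1-i)^n * t)) := by
  induction n with
  | zero => simp
  | succ n ih =>
    rw [Function.iterate_succ_apply', ih]
    simp only [subAddStep, Prod.mk.injEq, pow_succ]
    constructor
    · ring
    · linear_combination ((1+i)^n * s + (1-i)^n * t) * hi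

lemma mp_zero : Function.minimalPeriod (subAddStep p) 0 = 1 := by
  have h : Function.IsPeriodicPt (subAddStep p) 1 0 := by
    show (subAddStep p)^[1] 0 = 0
    simp [subAddStep]
  have h1 := h.minimalPeriod_dvd
  have h2 := h.minimalPeriod_pos one_pos
  exact Nat.dvd_one.mp h1

section Case3
variable [Fact p.Prime] (hp2 : p ≠ 2) (hsq : ¬ IsSquare (-1 : ZMod p))

include hp2 in
lemma two_ne : (2 : ZMod p) ≠ 0 := by
  intro h2
  have h : ((2:ℕ) : ZMod p) = 0 := by exact_mod_cast h2
  rw [ZMod.natCast_eq_zero_iff] at h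
  exact hp2 ((Nat.prime_dvd_prime_iff_eq (Fact.out) Nat.prime_two).mp h)

include hp2 in
lemma four_ne : (-4 : ZMod p) ≠ 0 := by
  have h2 := two_ne hp2
  intro h
  apply h2
  have : (2:ZMod p) * 2 = 0 := by linear_combination -h
  rcases mul_eq_zero.mp this with h | h <;> exact h

include hsq in
lemma sumsq (c d : ZMod p) (h : (c-1)^2 + d^2 = 0) : c = 1 ∧ d = 0 := by
  by_cases hd : d = 0
  · subst hd
    have : (c-1)^2 = 0 := by linear_combination h
    have := pow_eq_zero_iff (n := 2) (by norm_num) |>.mp this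
    constructor
    · linear_combination this
    · rfl
  · exfalso
    apply hsq
    refine ⟨(c-1) * d⁻¹, ?_⟩
    have hdi : d * d⁻¹ = 1 := mul_inv_cancel₀ hd
    field_simp
    linear_combination -h

include hsq in
lemma per_iff3 (x : ZMod p × ZMod p) (hx : x ≠ 0) (n : ℕ) :
    (subAddStep p)^[n] x = x ↔ (subAddStep p)^[n] (1, 0) = (1, 0) := by
  set c := ((subAddStep p)^[n] (1,0)).1 with hc
  set d := ((subAddStep p)^[n] (1,0)).2 with hd
  have hf : (subAddStep p)^[n] x = (c * x.1 - d * x.2, d * x.1 + c * x.2) := by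
    rw [show x = (x.1, x.2) from rfl, iter_formula]
  constructor
  · intro h
    rw [hf] at h
    have e1 : c * x.1 - d * x.2 = x.1 := congrArg Prod.fst h
    have e2 : d * x.1 + c * x.2 = x.2 := congrArg Prod.snd h
    have q1 : ((c-1)^2 + d^2) * x.1 = 0 := by linear_combination (c-1) * e1 + d * e2
    have q2 : ((c-1)^2 + d^2) * x.2 = 0 := by linear_combination (c-1) * e2 - d * e1
    by_cases hs : (c-1)^2 + d^2 = 0
    · obtain ⟨hc1, hd1⟩ := sumsq hsq c d hs
      have : (subAddStep p)^[n] (1,0) = (c, d) := rfl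
      rw [this, hc1, hd1]
    · exfalso
      apply hx
      have h1 : x.1 = 0 := by rcases mul_eq_zero.mp q1 with h | h; exact absurd h hs; exact h
      have h2 : x.2 = 0 := by rcases mul_eq_zero.mp q2 with h | h; exact absurd h hs; exact h
      exact Prod.ext h1 h2
  · intro h
    have hc1 : c = 1 := by rw [hc, h]
    have hd1 : d = 0 := by rw [hd, h]
    rw [hf, hc1, hd1]
    apply Prod.ext <;> simp

lemma iter_zero (n : ℕ) : (subAddStep p)^[n] (0 : ZMod p × ZMod p) = 0 := by
  rw [show (0 : ZMod p × ZMod p) = ((0:ZMod p), (0:ZMod p)) from rfl, iter_formula]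
  simp

include hsq in
lemma mp_all3 (k : ℕ) (hk : 0 < k) (hfix : ∀ x : ZMod p × ZMod p, (subAddStep p)^[k] x = x)
    (hmin : ∀ j, 0 < j → (∀ x : ZMod p × ZMod p, (subAddStep p)^[j] x = x) → k ≤ j)
    (x : ZMod p × ZMod p) (hx : x ≠ 0) :
    Function.minimalPeriod (subAddStep p) x = k := by
  have hper : Function.IsPeriodicPt (subAddStep p) k x := hfix x
  have hdvd := hper.minimalPeriod_dvd
  have hpos := hper.minimalPeriod_pos hk
  have hmp : (subAddStep p)^[Function.minimalPeriod (subAddStep p) x] x = x :=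
    Function.iterate_minimalPeriod
  have h10 := (per_iff3 hsq x hx _).mp hmp
  have hall : ∀ y, (subAddStep p)^[Function.minimalPeriod (subAddStep p) x] y = y := by
    intro y
    by_cases hy : y = 0
    · rw [hy]; exact iter_zero _
    · exact (per_iff3 hsq y hy _).mpr h10
  exact le_antisymm (Nat.le_of_dvd hk hdvd) (hmin _ hpos hall)

lemma iter_four_mul (q : ℕ) (x : ZMod p × ZMod p) :
    (subAddStep p)^[4*q] x = ((-4)^q * x.1, (-4)^q * x.2) := by
  induction q generalizing x with
  | zero => simp
  | succ q ih =>
    rw [show 4*(q+1) = 4*q + 4 by ring, Function.iterate_add_apply, ih, iter_four]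
    apply Prod.ext <;> · simp only []; ring

include hp2 hsq in
lemma eight3 (k : ℕ) (hk : 0 < k) (h1 : (subAddStep p)^[k] (1, 0) = ((1:ZMod p), (0:ZMod p))) :
    8 ∣ k := by
  have h2 := two_ne hp2
  have hne : ∀ m : ℕ, (-4:ZMod p)^m ≠ 0 := fun m => pow_ne_zero _ (four_ne hp2)
  obtain ⟨q, r, hr4, rfl⟩ : ∃ q r, r < 4 ∧ k = 4*q + r :=
    ⟨k / 4, k % 4, Nat.mod_lt _ (by norm_num), by rw [Nat.div_add_mod]⟩
  rw [Function.iterate_add_apply, iter_four_mul] at h1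
  interval_cases r
  · -- r = 0
    simp only [Function.iterate_zero_apply] at h1
    have hq1 : (-4:ZMod p)^q = 1 := by
      have := congrArg Prod.fst h1
      simpa using this
    rcases Nat.even_or_odd q with ⟨j, hj⟩ | ⟨j, hj⟩
    · exact ⟨j, by omega⟩
    · exfalso
      apply hsq
      have hy : ((-4:ZMod p)^(j+1)) * ((-4:ZMod p)^(j+1)) = -4 := by
        rw [← pow_add, show (j+1)+(j+1) = q + 1 by omega, pow_succ, hq1, one_mul]
      refine ⟨(-4:ZMod p)^(j+1) * 2⁻¹, ?_⟩
      have h2i : (2:ZMod p) * 2⁻¹ = 1 := mul_inv_cancel₀ h2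
      linear_combination (-(2⁻¹*2⁻¹ : ZMod p)) * hy + ((2:ZMod p)*2⁻¹ + 1) * h2i
  · -- r = 1
    have hr : (subAddStep p)^[1] ((1:ZMod p), (0:ZMod p)) = (1, 1) := by
      simp [subAddStep]
    rw [hr] at h1
    have h' : (-4:ZMod p)^q * 1 = 0 := congrArg Prod.snd h1
    rw [mul_one] at h'
    exact absurd h' (hne q)
  · -- r = 2
    have hr : (subAddStep p)^[2] ((1:ZMod p), (0:ZMod p)) = (0, 2) := by
      show subAddStep p (subAddStep p (1,0)) = _
      simp [subAddStep]; ring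
    rw [hr] at h1
    have h' : (-4:ZMod p)^q * 2 = 0 := congrArg Prod.snd h1
    rcases mul_eq_zero.mp h' with h | h
    · exact absurd h (hne q)
    · exact absurd h h2
  · -- r = 3
    have hr : (subAddStep p)^[3] ((1:ZMod p), (0:ZMod p)) = (-2, 2) := by
      show subAddStep p (subAddStep p (subAddStep p (1,0))) = _
      simp [subAddStep]
      constructor <;> ring
    rw [hr] at h1
    have h' : (-4:ZMod p)^q * 2 = 0 := congrArg Prod.snd h1
    rcases mul_eq_zero.mp h' with h | h
    · exact absurd h (hne q)
    · exact absurd h h2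

end Case3

section Case1
variable [Fact p.Prime] (hp2 : p ≠ 2) (i : ZMod p) (hi : i^2 = -1)

lemma cancel_right {c s : ZMod p} (hs : s ≠ 0) (h : c * s = s) : c = 1 := by
  have : (c - 1) * s = 0 := by linear_combination h
  rcases mul_eq_zero.mp this with h' | h'
  · linear_combination h'
  · exact absurd h' hs

lemma ord_pos {x : ZMod p} (hx : x ≠ 0) : 0 < orderOf x := by
  rw [orderOf_pos_iff, isOfFinOrder_iff_pow_eq_one]
  refine ⟨p - 1, ?_, ZMod.pow_card_sub_one_eq_one hx⟩
  have := (Fact.out : p.Prime).two_le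
  omega

include hi in
lemma i_ne : i ≠ 0 := by
  intro h
  rw [h] at hi
  simp at hi

include hp2 hi in
lemma alpha_ne : (1 + i : ZMod p) ≠ 0 := by
  intro h
  apply two_ne hp2
  have hieq : i = -1 := by linear_combination h
  rw [hieq] at hi
  linear_combination hi

include hp2 hi in
lemma beta_ne : (1 - i : ZMod p) ≠ 0 := by
  intro h
  apply two_ne hp2
  have hieq : i = 1 := by linear_combination -h
  rw [hieq] at hi
  linear_combination hi

include hi in
lemma per_iff1 (n : ℕ) (s t : ZMod p) (h2 : (2:ZMod p) ≠ 0) :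
    (subAddStep p)^[n] (s + t, -(i*s) + i*t) = (s + t, -(i*s) + i*t) ↔
      ((1+i)^n * s = s ∧ (1-i)^n * t = t) := by
  rw [iter_eigen i n s t hi]
  constructor
  · intro h
    have e1 : (1+i)^n * s + (1-i)^n * t = s + t := congrArg Prod.fst h
    have e2 : -(i*((1+i)^n * s)) + i*((1-i)^n * t) = -(i*s) + i*t := congrArg Prod.snd h
    have e3 : (1+i)^n * s - (1-i)^n * t = s - t := by
      linear_combination i * e2 + ((1+i)^n * s - (1-i)^n * t - s + t) * hi
    constructor
    · apply mul_left_cancel₀ h2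
      linear_combination e1 + e3
    · apply mul_left_cancel₀ h2
      linear_combination e1 - e3
  · rintro ⟨h1, h2⟩
    rw [h1, h2]

include hi in
lemma decomp (h2 : (2:ZMod p) ≠ 0) (x : ZMod p × ZMod p) :
    x = ((x.1 + i*x.2)*2⁻¹ + (x.1 - i*x.2)*2⁻¹,
         -(i*((x.1 + i*x.2)*2⁻¹)) + i*((x.1 - i*x.2)*2⁻¹)) := by
  have h2i : (2:ZMod p) * 2⁻¹ = 1 := mul_inv_cancel₀ h2
  apply Prod.ext
  · linear_combination (-x.1) * h2i
  · linear_combination (-x.2) * h2i + (2*2⁻¹*x.2) * hi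

include hi in
lemma mp_gen (h2 : (2:ZMod p) ≠ 0) (s t : ZMod p) (m : ℕ) (hm : 0 < m)
    (ha1 : (1+i)^m * s = s) (hb1 : (1-i)^m * t = t)
    (hmin : ∀ n, 0 < n → (1+i)^n * s = s → (1-i)^n * t = t → m ∣ n) :
    Function.minimalPeriod (subAddStep p) (s + t, -(i*s) + i*t) = m := by
  have hper : Function.IsPeriodicPt (subAddStep p) m (s + t, -(i*s) + i*t) :=
    (per_iff1 i hi m s t h2).mpr ⟨ha1, hb1⟩
  have hmp := Function.iterate_minimalPeriod
    (f := subAddStep p) (x := (s + t, -(i*s) + i*t))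
  obtain ⟨g1, g2⟩ := (per_iff1 i hi _ s t h2).mp hmp
  exact Nat.dvd_antisymm hper.minimalPeriod_dvd
    (hmin _ (hper.minimalPeriod_pos hm) g1 g2)

include hp2 hi in
lemma mp10 (s : ZMod p) (hs : s ≠ 0) :
    Function.minimalPeriod (subAddStep p) (s + 0, -(i*s) + i*0) = orderOf (1+i : ZMod p) := by
  have h2 := two_ne hp2
  refine mp_gen i hi h2 s 0 _ (ord_pos (alpha_ne hp2 i hi)) ?_ (by rw [mul_zero]) ?_
  · rw [pow_orderOf_eq_one, one_mul]
  · intro n _ h1 _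
    exact orderOf_dvd_of_pow_eq_one (cancel_right hs h1)

include hp2 hi in
lemma mp01 (t : ZMod p) (ht : t ≠ 0) :
    Function.minimalPeriod (subAddStep p) (0 + t, -(i*0) + i*t) = orderOf (1-i : ZMod p) := by
  have h2 := two_ne hp2
  refine mp_gen i hi h2 0 t _ (ord_pos (beta_ne hp2 i hi)) (by rw [mul_zero]) ?_ ?_
  · rw [pow_orderOf_eq_one, one_mul]
  · intro n _ _ h1
    exact orderOf_dvd_of_pow_eq_one (cancel_right ht h1)

include hp2 hi in
lemma mp11 (s t : ZMod p) (hs : s ≠ 0) (ht : t ≠ 0) :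
    Function.minimalPeriod (subAddStep p) (s + t, -(i*s) + i*t) =
      Nat.lcm (orderOf (1+i : ZMod p)) (orderOf (1-i : ZMod p)) := by
  have h2 := two_ne hp2
  have hapos := ord_pos (alpha_ne hp2 i hi)
  have hbpos := ord_pos (beta_ne hp2 i hi)
  refine mp_gen i hi h2 s t _ (Nat.pos_of_ne_zero (Nat.lcm_ne_zero hapos.ne' hbpos.ne')) ?_ ?_ ?_
  · rw [orderOf_dvd_iff_pow_eq_one.mp (Nat.dvd_lcm_left _ _), one_mul]
  · rw [orderOf_dvd_iff_pow_eq_one.mp (Nat.dvd_lcm_right _ _), one_mul]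
  · intro n _ h1 h1'
    exact Nat.lcm_dvd (orderOf_dvd_of_pow_eq_one (cancel_right hs h1))
      (orderOf_dvd_of_pow_eq_one (cancel_right ht h1'))

lemma ord_mul_eq (x c : ZMod p) (hc2 : c^2 = -1) (h8 : 8 ∣ orderOf x)
    (hpos : 0 < orderOf x) : orderOf (c * x) = orderOf x := by
  obtain ⟨w, hw⟩ := h8
  have hwpos : 0 < w := by omega
  have hx1 : x ^ (8*w) = 1 := by rw [← hw]; exact pow_orderOf_eq_one x
  have hz2 : x^(4*w) = 1 ∨ x^(4*w) = -1 := by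
    apply mul_self_eq_one_iff.mp
    rw [← pow_add]
    rw [show 4*w + 4*w = 8*w by ring]
    exact hx1
  have hz2' : x^(4*w) = -1 := by
    rcases hz2 with h | h
    · exfalso
      have := orderOf_dvd_of_pow_eq_one h
      rw [hw] at this
      have := Nat.le_of_dvd (by omega) this
      omega
    · exact h
  have hzz : (x^(2*w) - c) * (x^(2*w) + c) = 0 := by
    have : (x^(2*w))^2 = c^2 := by
      rw [hc2, ← pow_mul, show 2*w*2 = 4*w by ring]
      exact hz2'
    linear_combination this
  have key : ∃ m : ℕ, c * x = x ^ m ∧ Nat.gcd (orderOf x) m = 1 ∧ m ≠ 0 := by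
    rcases mul_eq_zero.mp hzz with h | h
    · -- x^(2w) = c
      refine ⟨2*w + 1, ?_, ?_, by omega⟩
      · have hc : c = x^(2*w) := by linear_combination -h
        rw [hc, ← pow_succ]
      · rw [hw]
        have hodd : ¬ 2 ∣ (2*w+1) := by omega
        have hcop : Nat.Coprime 4 (2*w+1) :=
          Nat.Coprime.pow_left 2 ((Nat.prime_two.coprime_iff_not_dvd).mpr hodd)
        have hd4 : Nat.gcd (8*w) (2*w+1) ∣ 4 := by
          have h1 : Nat.gcd (8*w) (2*w+1) ∣ 4*(2*w+1) :=
            Dvd.dvd.mul_left (Nat.gcd_dvd_right _ _) 4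
          have h2 : Nat.gcd (8*w) (2*w+1) ∣ 8*w := Nat.gcd_dvd_left _ _
          have := Nat.dvd_sub h1 h2
          rwa [show 4*(2*w+1) - 8*w = 4 by omega] at this
        have := Nat.dvd_gcd hd4 (Nat.gcd_dvd_right (8*w) (2*w+1))
        rwa [hcop, Nat.dvd_one] at this
    · -- x^(2w) = -c
      refine ⟨6*w + 1, ?_, ?_, by omega⟩
      · have hc : c = x^(2*w) * x^(4*w) := by
          rw [hz2']
          linear_combination h
        rw [hc, ← pow_add, ← pow_succ]
        congr 1
        omega
      · rw [hw]
        have hodd : ¬ 2 ∣ (6*w+1) := by omega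
        have hcop : Nat.Coprime 4 (6*w+1) :=
          Nat.Coprime.pow_left 2 ((Nat.prime_two.coprime_iff_not_dvd).mpr hodd)
        have hd4 : Nat.gcd (8*w) (6*w+1) ∣ 4 := by
          have h1 : Nat.gcd (8*w) (6*w+1) ∣ 4*(6*w+1) :=
            Dvd.dvd.mul_left (Nat.gcd_dvd_right _ _) 4
          have h2 : Nat.gcd (8*w) (6*w+1) ∣ 3*(8*w) :=
            Dvd.dvd.mul_left (Nat.gcd_dvd_left _ _) 3
          have := Nat.dvd_sub h1 h2
          rwa [show 4*(6*w+1) - 3*(8*w) = 4 by omega] at this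
        have := Nat.dvd_gcd hd4 (Nat.gcd_dvd_right (8*w) (6*w+1))
        rwa [hcop, Nat.dvd_one] at this
  obtain ⟨m, hm, hgcd, hm0⟩ := key
  rw [hm, orderOf_pow' x hm0, hgcd, Nat.div_one]

lemma ord_mul_eight (x c : ZMod p) (hc2 : c^2 = -1) (h2 : (2:ZMod p) ≠ 0)
    (hpos : 0 < orderOf x) (heq : orderOf (c * x) = orderOf x) : 8 ∣ orderOf x := by
  have hne1 : (-1 : ZMod p) ≠ 1 := by
    intro h
    exact h2 (by linear_combination -h)
  have hc4 : orderOf c = 4 := by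
    have h4 : c^4 = 1 := by
      rw [show (4:ℕ) = 2*2 by rfl, pow_mul, hc2]
      ring
    have hd : orderOf c ∣ 4 := orderOf_dvd_of_pow_eq_one h4
    have hnd : ¬ orderOf c ∣ 2 := by
      intro h
      have : c^2 = 1 := orderOf_dvd_iff_pow_eq_one.mp h
      rw [hc2] at this
      exact hne1 this
    rcases (Nat.dvd_prime_pow Nat.prime_two).mp (show orderOf c ∣ 2^2 from hd) with
      ⟨j, hj, hjeq⟩
    interval_cases j
    · exact absurd (hjeq ▸ Nat.one_dvd 2) hnd
    · exact absurd (hjeq ▸ dvd_refl 2) hnd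
    · exact hjeq
  set n := orderOf x with hn
  have hx1 : x ^ n = 1 := pow_orderOf_eq_one x
  have hcx1 : (c*x) ^ n = 1 := by rw [← heq]; exact pow_orderOf_eq_one _
  have hcn : c ^ n = 1 := by
    have : c^n * x^n = 1 := by rw [← mul_pow]; exact hcx1
    rwa [hx1, mul_one] at this
  have h4n : 4 ∣ n := hc4 ▸ orderOf_dvd_of_pow_eq_one hcn
  obtain ⟨u, hu⟩ := h4n
  have hupos : 0 < u := by omega
  rcases Nat.even_or_odd u with ⟨j, hj⟩ | ⟨j, hj⟩
  · exact ⟨j, by omega⟩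
  · exfalso
    have hxu : x^(2*u) = -1 := by
      rcases mul_self_eq_one_iff.mp (show x^(2*u) * x^(2*u) = 1 by
        rw [← pow_add, show 2*u+2*u = n by omega]; exact hx1) with h | h
      · exfalso
        have := Nat.le_of_dvd (by omega) (hn ▸ orderOf_dvd_of_pow_eq_one h)
        omega
      · exact h
    have hcxu : (c*x)^(2*u) = 1 := by
      rw [mul_pow, hxu, pow_mul, hc2,
        Odd.neg_one_pow (by exact ⟨j, by omega⟩)]
      ring
    have := Nat.le_of_dvd (by omega) (heq ▸ orderOf_dvd_of_pow_eq_one hcxu)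
    omega

lemma eight_lcm {a b : ℕ} (ha : a ≠ 0) (hb : b ≠ 0) (h : 8 ∣ Nat.lcm a b) :
    8 ∣ a ∨ 8 ∣ b := by
  have hl : Nat.lcm a b ≠ 0 := Nat.lcm_ne_zero ha hb
  rw [show (8:ℕ) = 2^3 from rfl, Nat.Prime.pow_dvd_iff_le_factorization Nat.prime_two hl,
    Nat.factorization_lcm ha hb] at h
  rw [Finsupp.sup_apply, le_sup_iff] at h
  rcases h with h | h
  · exact Or.inl ((Nat.Prime.pow_dvd_iff_le_factorization Nat.prime_two ha).mpr h)
  · exact Or.inr ((Nat.Prime.pow_dvd_iff_le_factorization Nat.prime_two hb).mpr h)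

end Case1

end Stmt17

/-- for an odd prime `p` with `k` the `ℤ_p`-order of the sub-add matrix,
`Γ_{M,p}` contains a secondary cycle (a vertex whose minimal period is neither `1` nor
`k`) if and only if `8` does not divide `k`. -/
theorem stmt17 (p k : ℕ) (hp : p.Prime) (hpodd : p ≠ 2)
    (hk : 0 < k) (hfix : ∀ x : ZMod p × ZMod p, (subAddStep p)^[k] x = x)
    (hmin : ∀ j, 0 < j → (∀ x : ZMod p × ZMod p, (subAddStep p)^[j] x = x) → k ≤ j) :
    (∃ x : ZMod p × ZMod p,
      Function.minimalPeriod (subAddStep p) x ≠ 1 ∧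
      Function.minimalPeriod (subAddStep p) x ≠ k) ↔ ¬ (8 ∣ k) := by
  haveI : Fact p.Prime := ⟨hp⟩
  by_cases hsq : IsSquare (-1 : ZMod p)
  · -- p ≡ 1 (mod 4)
    obtain ⟨i, hi0⟩ := hsq
    have hi : i^2 = -1 := by rw [sq]; exact hi0.symm
    have h2 := Stmt17.two_ne hpodd
    have hA := Stmt17.alpha_ne hpodd i hi
    have hB := Stmt17.beta_ne hpodd i hi
    set a := orderOf (1+i : ZMod p) with hadef
    set b := orderOf (1-i : ZMod p) with hbdef
    have hapos : 0 < a := Stmt17.ord_pos hA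
    have hbpos : 0 < b := Stmt17.ord_pos hB
    have hak : a ∣ k := by
      have h := hfix ((1:ZMod p) + 0, -(i*1) + i*0)
      obtain ⟨h1, _⟩ := (Stmt17.per_iff1 i hi k 1 0 h2).mp h
      rw [mul_one] at h1
      exact orderOf_dvd_of_pow_eq_one h1
    have hbk : b ∣ k := by
      have h := hfix ((0:ZMod p) + 1, -(i*0) + i*1)
      obtain ⟨_, h1⟩ := (Stmt17.per_iff1 i hi k 0 1 h2).mp h
      rw [mul_one] at h1
      exact orderOf_dvd_of_pow_eq_one h1
    have hkeq : k = Nat.lcm a b := by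
      apply le_antisymm
      · apply hmin _ (Nat.pos_of_ne_zero (Nat.lcm_ne_zero hapos.ne' hbpos.ne'))
        intro x
        rw [Stmt17.decomp i hi h2 x]
        apply (Stmt17.per_iff1 i hi _ _ _ h2).mpr
        constructor
        · rw [orderOf_dvd_iff_pow_eq_one.mp (Nat.dvd_lcm_left a b), one_mul]
        · rw [orderOf_dvd_iff_pow_eq_one.mp (Nat.dvd_lcm_right a b), one_mul]
      · exact Nat.le_of_dvd hk (Nat.lcm_dvd hak hbk)
    have ha1 : a ≠ 1 := by
      intro h
      have h' : (1 + i : ZMod p) = 1 := orderOf_eq_one_iff.mp h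
      exact Stmt17.i_ne i hi (by linear_combination h')
    have hb1 : b ≠ 1 := by
      intro h
      have h' : (1 - i : ZMod p) = 1 := orderOf_eq_one_iff.mp h
      exact Stmt17.i_ne i hi (by linear_combination -h')
    have hrel1 : (-i) * (1+i) = 1 - i := by linear_combination -hi
    have hrel2 : i * (1-i) = 1 + i := by linear_combination -hi
    have hnegsq : (-i)^2 = -1 := by rw [neg_sq]; exact hi
    have h8ab : 8 ∣ k → a = b := by
      intro h8
      rcases Stmt17.eight_lcm hapos.ne' hbpos.ne' (hkeq ▸ h8) with h | h
      · have := Stmt17.ord_mul_eq (1+i) (-i) hnegsq h hapos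
        rw [hrel1] at this
        exact this.symm
      · have := Stmt17.ord_mul_eq (1-i) i hi h hbpos
        rw [hrel2] at this
        exact this
    have hab8 : a = b → 8 ∣ k := by
      intro hab
      rw [hkeq, ← hab, Nat.lcm_self]
      apply Stmt17.ord_mul_eight (1+i) (-i) hnegsq h2 hapos
      rw [hrel1]
      exact hab.symm
    have hmpx : ∀ x : ZMod p × ZMod p, Function.minimalPeriod (subAddStep p) x = 1 ∨
        Function.minimalPeriod (subAddStep p) x = a ∨
        Function.minimalPeriod (subAddStep p) x = b ∨
        Function.minimalPeriod (subAddStep p) x = Nat.lcm a b := by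
      intro x
      set s := (x.1 + i*x.2)*2⁻¹ with hsdef
      set t := (x.1 - i*x.2)*2⁻¹ with htdef
      have hx := Stmt17.decomp i hi h2 x
      rw [← hsdef, ← htdef] at hx
      by_cases hs : s = 0 <;> by_cases ht : t = 0
      · left; rw [hx, hs, ht]; simp only [add_zero, mul_zero, neg_zero]; exact Stmt17.mp_zero
      · right; right; left; rw [hx, hs]; exact Stmt17.mp01 hpodd i hi t ht
      · right; left; rw [hx, ht]; exact Stmt17.mp10 hpodd i hi s hs
      · right; right; right; rw [hx]; exact Stmt17.mp11 hpodd i hi s t hs ht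
    constructor
    · rintro ⟨x, h1, hkx⟩ h8
      have hab := h8ab h8
      rcases hmpx x with h | h | h | h
      · exact h1 h
      · apply hkx; rw [h, hkeq, ← hab, Nat.lcm_self]
      · apply hkx; rw [h, hkeq, ← hab, Nat.lcm_self]
      · apply hkx; rw [h, hkeq]
    · intro h8
      have hab : a ≠ b := fun h => h8 (hab8 h)
      have hor : a ≠ k ∨ b ≠ k := by
        by_contra hcon
        push_neg at hcon
        exact hab (hcon.1.trans hcon.2.symm)
      rcases hor with hne | hne
      · refine ⟨((1:ZMod p) + 0, -(i*1) + i*0), ?_, ?_⟩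
        · rw [Stmt17.mp10 hpodd i hi 1 one_ne_zero]; exact ha1
        · rw [Stmt17.mp10 hpodd i hi 1 one_ne_zero]; exact hne
      · refine ⟨((0:ZMod p) + 1, -(i*0) + i*1), ?_, ?_⟩
        · rw [Stmt17.mp01 hpodd i hi 1 one_ne_zero]; exact hb1
        · rw [Stmt17.mp01 hpodd i hi 1 one_ne_zero]; exact hne
  · -- p ≡ 3 (mod 4)
    have h8 : 8 ∣ k := Stmt17.eight3 hpodd hsq k hk (hfix (1, 0))
    constructor
    · rintro ⟨x, h1, hkx⟩
      by_cases hx : x = 0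
      · exact absurd (by rw [hx]; exact Stmt17.mp_zero) h1
      · exact absurd (Stmt17.mp_all3 hsq k hk hfix hmin x hx) hkx
    · intro h
      exact absurd h8 h
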